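/- The unmodified cell-centered U-MUSCL reconstruction u_L = κ (u_j + u_k)/2 + (1−κ)[u_j + b·(x_fc − x_j)] applied to an affine function u(x) = a + b·x yields u_L = u(x_fc) + κ b·((x_j + x_k)/2 − x_fc); hence it fails to be exact for affine functions (loses second-order accuracy) whenever κ ≠ 0 and the face centroid x_fc differs from the midpoint (x_j + x_k)/2 in the direction of b. -/
import Mathlib


open Matrix

/-- The unmodified cell-centered U-MUSCL reconstruction applied to an affine
function has error κ b·((x_j + x_k)/2 − x_fc), hence is inexact whenever
κ ≠ 0 and the face centroid differs from the midpoint in the direction of b. -/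
theorem unmodified_cell_centered_umuscl_affine_error {n : ℕ} (a : ℝ)
    (b xj xk xfc : Fin n → ℝ) (κ : ℝ)
    (u : (Fin n → ℝ) → ℝ) (hu : ∀ x, u x = a + b ⬝ᵥ x) :
    κ * ((u xj + u xk) / 2) + (1 - κ) * (u xj + b ⬝ᵥ (xfc - xj)) =
        u xfc + κ * (b ⬝ᵥ ((1 / 2 : ℝ) • (xj + xk) - xfc)) ∧
      (κ ≠ 0 → b ⬝ᵥ ((1 / 2 : ℝ) • (xj + xk) - xfc) ≠ 0 →
        κ * ((u xj + u xk) / 2) + (1 - κ) * (u xj + b ⬝ᵥ (xfc - xj)) ≠ u xfc) := by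
  have key : κ * ((u xj + u xk) / 2) + (1 - κ) * (u xj + b ⬝ᵥ (xfc - xj)) =
      u xfc + κ * (b ⬝ᵥ ((1 / 2 : ℝ) • (xj + xk) - xfc)) := by
    simp only [hu, dotProduct_sub, dotProduct_add, dotProduct_smul, smul_eq_mul]
    ring
  refine ⟨key, fun hκ hb => ?_⟩
  rw [key]
  intro h
  exact mul_ne_zero hκ hb (add_eq_left.mp h)
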